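/- The function ϱ(Λ₁, Λ₂) = min{ϱ̄(Λ₁, Λ₂), 2^{-1/2}} satisfies the triangle inequality on the collection of Delone sets in ℝ^d, where ϱ̄(Λ₁, Λ₂) = inf{ε > 0 : ∃ s, t ∈ B_ε(0) such that B_{1/ε}(0) ∩ (Λ₁ - s) = B_{1/ε}(0) ∩ (Λ₂ - t)}. -/
import Mathlib

open Set Metric

/-- The translate `Λ - t` of a point set. -/
def translateSet {d : ℕ} (Λ : Set (EuclideanSpace ℝ (Fin d))) (t : EuclideanSpace ℝ (Fin d)) :
    Set (EuclideanSpace ℝ (Fin d)) :=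
  (fun x => x - t) '' Λ

/-- `Λ` is a Delone set: uniformly discrete and relatively dense. -/
def IsDeloneSet {d : ℕ} (Λ : Set (EuclideanSpace ℝ (Fin d))) : Prop :=
  (∃ ε > (0 : ℝ), ∀ x ∈ Λ, ∀ y ∈ Λ, x ≠ y → ε < dist x y) ∧
  (∃ R > (0 : ℝ), ∀ x : EuclideanSpace ℝ (Fin d), (Λ ∩ Metric.ball x R).Nonempty)

/-- The quantity ϱ̄. -/
noncomputable def rhoBar {d : ℕ} (Λ₁ Λ₂ : Set (EuclideanSpace ℝ (Fin d))) : ℝ :=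
  sInf {ε : ℝ | 0 < ε ∧ ∃ s t : EuclideanSpace ℝ (Fin d), ‖s‖ < ε ∧ ‖t‖ < ε ∧
    Metric.ball (0 : EuclideanSpace ℝ (Fin d)) (1 / ε) ∩ translateSet Λ₁ s =
      Metric.ball (0 : EuclideanSpace ℝ (Fin d)) (1 / ε) ∩ translateSet Λ₂ t}

/-- The metric ϱ = min(ϱ̄, 2^{-1/2}). -/
noncomputable def rhoDelone {d : ℕ} (Λ₁ Λ₂ : Set (EuclideanSpace ℝ (Fin d))) : ℝ :=
  min (rhoBar Λ₁ Λ₂) ((2 : ℝ) ^ (-(1 / 2 : ℝ)))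

namespace RhoAux

variable {d : ℕ}

/-- The admissible set of ε's. -/
def Sset (Λ₁ Λ₂ : Set (EuclideanSpace ℝ (Fin d))) : Set ℝ :=
  {ε : ℝ | 0 < ε ∧ ∃ s t : EuclideanSpace ℝ (Fin d), ‖s‖ < ε ∧ ‖t‖ < ε ∧
    Metric.ball (0 : EuclideanSpace ℝ (Fin d)) (1 / ε) ∩ translateSet Λ₁ s =
      Metric.ball (0 : EuclideanSpace ℝ (Fin d)) (1 / ε) ∩ translateSet Λ₂ t}

lemma rhoBar_eq (Λ₁ Λ₂ : Set (EuclideanSpace ℝ (Fin d))) :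
    rhoBar Λ₁ Λ₂ = sInf (Sset Λ₁ Λ₂) := rfl

lemma mem_translateSet {Λ : Set (EuclideanSpace ℝ (Fin d))} {t x : EuclideanSpace ℝ (Fin d)} :
    x ∈ translateSet Λ t ↔ x + t ∈ Λ := by
  constructor
  · rintro ⟨y, hy, rfl⟩
    simpa [sub_add_cancel] using hy
  · intro h
    exact ⟨x + t, h, add_sub_cancel_right x t⟩

lemma inter_eq_iff {Λ₁ Λ₂ : Set (EuclideanSpace ℝ (Fin d))} {s t : EuclideanSpace ℝ (Fin d)}
    {r : ℝ} :
    (Metric.ball (0 : EuclideanSpace ℝ (Fin d)) r ∩ translateSet Λ₁ s =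
      Metric.ball (0 : EuclideanSpace ℝ (Fin d)) r ∩ translateSet Λ₂ t) ↔
    ∀ z : EuclideanSpace ℝ (Fin d), ‖z‖ < r → (z + s ∈ Λ₁ ↔ z + t ∈ Λ₂) := by
  rw [Set.ext_iff]
  simp only [Set.mem_inter_iff, mem_ball_zero_iff, mem_translateSet]
  constructor
  · intro h z hz
    have := h z
    tauto
  · intro h z
    exact and_congr_right (h z)

lemma Sset_symm {Λ₁ Λ₂ : Set (EuclideanSpace ℝ (Fin d))} {ε : ℝ} (h : ε ∈ Sset Λ₁ Λ₂) :
    ε ∈ Sset Λ₂ Λ₁ := by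
  obtain ⟨hε, s, t, hs, ht, heq⟩ := h
  exact ⟨hε, t, s, ht, hs, heq.symm⟩

lemma Sset_nonempty {Λ₁ Λ₂ : Set (EuclideanSpace ℝ (Fin d))}
    (h₁ : IsDeloneSet Λ₁) (h₂ : IsDeloneSet Λ₂) : (Sset Λ₁ Λ₂).Nonempty := by
  obtain ⟨⟨ε₁, hε₁, hd₁⟩, ⟨R₁, hR₁, hr₁⟩⟩ := h₁
  obtain ⟨⟨ε₂, hε₂, hd₂⟩, ⟨R₂, hR₂, hr₂⟩⟩ := h₂
  obtain ⟨x, hxΛ, hx⟩ := hr₁ 0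
  obtain ⟨y, hyΛ, hy⟩ := hr₂ 0
  rw [mem_ball, dist_zero_right] at hx
  rw [mem_ball, dist_zero_right] at hy
  set ε : ℝ := R₁ + R₂ + 1 / ε₁ + 1 / ε₂ + 1 with hεdef
  have hp1 : (0:ℝ) < 1 / ε₁ := by positivity
  have hp2 : (0:ℝ) < 1 / ε₂ := by positivity
  have hεpos : 0 < ε := by positivity
  have hinv₁ : 1 / ε ≤ ε₁ := by
    rw [div_le_iff₀ hεpos]
    have h1 : 1 / ε₁ ≤ ε := by rw [hεdef]; linarith
    calc (1:ℝ) = ε₁ * (1/ε₁) := by field_simp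
      _ ≤ ε₁ * ε := by exact mul_le_mul_of_nonneg_left h1 hε₁.le
  have hinv₂ : 1 / ε ≤ ε₂ := by
    rw [div_le_iff₀ hεpos]
    have h1 : 1 / ε₂ ≤ ε := by rw [hεdef]; linarith
    calc (1:ℝ) = ε₂ * (1/ε₂) := by field_simp
      _ ≤ ε₂ * ε := by exact mul_le_mul_of_nonneg_left h1 hε₂.le
  refine ⟨ε, hεpos, x, y, ?_, ?_, ?_⟩
  · rw [hεdef]; linarith
  · rw [hεdef]; linarith
  · rw [inter_eq_iff]
    intro z hz
    constructor
    · intro hmem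
      by_cases h0 : z = 0
      · subst h0; simpa using hyΛ
      · exfalso
        have hne : z + x ≠ x := by
          intro hc
          exact h0 (by simpa using congrArg (fun v => v - x) hc)
        have := hd₁ (z + x) hmem x hxΛ hne
        rw [dist_eq_norm] at this
        have : ε₁ < ‖z‖ := by simpa using this
        linarith [lt_of_lt_of_le hz hinv₁]
    · intro hmem
      by_cases h0 : z = 0
      · subst h0; simpa using hxΛ
      · exfalso
        have hne : z + y ≠ y := by
          intro hc
          exact h0 (by simpa using congrArg (fun v => v - y) hc)
        have := hd₂ (z + y) hmem y hyΛ hne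
        rw [dist_eq_norm] at this
        have : ε₂ < ‖z‖ := by simpa using this
        linarith [lt_of_lt_of_le hz hinv₂]

section Key

variable {Λ₁ Λ₂ Λ₃ : Set (EuclideanSpace ℝ (Fin d))}

/-- The computational core: given witnesses and a correction vector `δ`. -/
lemma key_inner (a b η : ℝ) (ha : 0 < a) (hb : 0 < b) (hη : 0 < η) (hba : b ≤ a)
    (hsq : (a + b + η) * (a + b + η) ≤ 1 / 2)
    (s₁ t₁ s₂ t₂ δ : EuclideanSpace ℝ (Fin d))
    (hs₁ : ‖s₁‖ < a) (ht₁ : ‖t₁‖ < a) (hs₂ : ‖s₂‖ < b) (ht₂ : ‖t₂‖ < b)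
    (hδ : ‖δ‖ ≤ b) (hT : ‖t₁ + t₂ - s₂ + δ‖ < a + b + η)
    (H₁ : ∀ z : EuclideanSpace ℝ (Fin d), ‖z‖ < 1 / a → (z + s₁ ∈ Λ₁ ↔ z + t₁ ∈ Λ₂))
    (H₂ : ∀ z : EuclideanSpace ℝ (Fin d), ‖z‖ < 1 / b → (z + s₂ ∈ Λ₂ ↔ z + t₂ ∈ Λ₃)) :
    ∃ s t : EuclideanSpace ℝ (Fin d), ‖s‖ < a + b + η ∧ ‖t‖ < a + b + η ∧
      ∀ u : EuclideanSpace ℝ (Fin d), ‖u‖ < 1 / (a + b + η) →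
        (u + s ∈ Λ₁ ↔ u + t ∈ Λ₃) := by
  have hε : (0:ℝ) < a + b + η := by linarith
  have haε : a * (a + b + η) ≤ 1 := by nlinarith
  have key1 : 1 / (a + b + η) + b ≤ 1 / a := by
    rw [div_add' _ _ _ hε.ne', div_le_div_iff₀ hε ha]
    nlinarith [mul_le_mul_of_nonneg_left haε hb.le]
  have h2b : a + 2 * b ≤ 3 / 2 * (a + b + η) := by linarith
  have h3 : (a + 2 * b) * (a + b + η) ≤ 3 / 4 := by
    nlinarith [mul_le_mul_of_nonneg_right h2b hε.le]
  have hkey : b * ((a + 2 * b) * (a + b + η)) ≤ a := by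
    nlinarith [mul_le_mul_of_nonneg_left h3 hb.le]
  have key2 : 1 / (a + b + η) + (a + 2 * b) ≤ 1 / b := by
    rw [div_add' _ _ _ hε.ne', div_le_div_iff₀ hε hb]
    nlinarith [hkey]
  refine ⟨s₁ + δ, t₁ + t₂ - s₂ + δ, ?_, hT, fun u hu => ?_⟩
  · calc ‖s₁ + δ‖ ≤ ‖s₁‖ + ‖δ‖ := norm_add_le _ _
      _ < a + b + η := by linarith
  have h1 : ‖u + δ‖ < 1 / a := by
    calc ‖u + δ‖ ≤ ‖u‖ + ‖δ‖ := norm_add_le _ _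
      _ < 1 / (a + b + η) + b := by linarith
      _ ≤ 1 / a := key1
  have h2 : ‖u + δ + t₁ - s₂‖ < 1 / b := by
    have e : ‖u + δ + t₁ - s₂‖ ≤ ‖u‖ + ‖δ‖ + ‖t₁‖ + ‖s₂‖ := by
      calc ‖u + δ + t₁ - s₂‖ ≤ ‖u + δ + t₁‖ + ‖s₂‖ := norm_sub_le _ _
        _ ≤ ‖u + δ‖ + ‖t₁‖ + ‖s₂‖ := by linarith [norm_add_le (u + δ) t₁]
        _ ≤ ‖u‖ + ‖δ‖ + ‖t₁‖ + ‖s₂‖ := by linarith [norm_add_le u δ]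
    calc ‖u + δ + t₁ - s₂‖ ≤ ‖u‖ + ‖δ‖ + ‖t₁‖ + ‖s₂‖ := e
      _ < 1 / (a + b + η) + (a + 2 * b) := by linarith
      _ ≤ 1 / b := key2
  have A := H₁ (u + δ) h1
  have B := H₂ (u + δ + t₁ - s₂) h2
  rw [show u + δ + s₁ = u + (s₁ + δ) from by abel] at A
  rw [show u + δ + t₁ - s₂ + s₂ = u + δ + t₁ from by abel,
      show u + δ + t₁ - s₂ + t₂ = u + (t₁ + t₂ - s₂ + δ) from by abel] at B
  exact A.trans B

/-- The key step: sums of admissible ε's (plus slack) are admissible, assuming smallness. -/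
lemma key_step (a b η : ℝ) (hη : 0 < η) (hba : b ≤ a)
    (hsq : (a + b + η) * (a + b + η) ≤ 1 / 2)
    (hA : a ∈ Sset Λ₁ Λ₂) (hB : b ∈ Sset Λ₂ Λ₃) :
    (a + b + η) ∈ Sset Λ₁ Λ₃ := by
  obtain ⟨ha, s₁, t₁, hs₁, ht₁, heq₁⟩ := hA
  obtain ⟨hb, s₂, t₂, hs₂, ht₂, heq₂⟩ := hB
  rw [inter_eq_iff] at heq₁ heq₂
  have hε : (0:ℝ) < a + b + η := by linarith
  set w : EuclideanSpace ℝ (Fin d) := t₁ + t₂ - s₂ with hw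
  have hwnorm : ‖w‖ < a + 2 * b := by
    calc ‖w‖ ≤ ‖t₁ + t₂‖ + ‖s₂‖ := norm_sub_le _ _
      _ ≤ ‖t₁‖ + ‖t₂‖ + ‖s₂‖ := by linarith [norm_add_le t₁ t₂]
      _ < a + 2 * b := by linarith
  have main : ∃ δ : EuclideanSpace ℝ (Fin d), ‖δ‖ ≤ b ∧ ‖w + δ‖ < a + b + η := by
    by_cases hcase : ‖w‖ ≤ a + b
    · exact ⟨0, by simpa using hb.le, by simpa using lt_of_le_of_lt hcase (by linarith)⟩
    · push_neg at hcase
      have hwpos : (0:ℝ) < ‖w‖ := by linarith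
      refine ⟨((a + b) / ‖w‖ - 1) • w, ?_, ?_⟩
      · rw [norm_smul, Real.norm_eq_abs]
        have h01 : (a + b) / ‖w‖ - 1 ≤ 0 := by
          rw [sub_nonpos, div_le_one hwpos]; linarith
        rw [abs_of_nonpos h01]
        have : (1 - (a + b) / ‖w‖) * ‖w‖ = ‖w‖ - (a + b) := by
          field_simp
        rw [show -((a+b)/‖w‖ - 1) = 1 - (a+b)/‖w‖ from by ring, this]
        linarith
      · have : w + ((a + b) / ‖w‖ - 1) • w = ((a + b) / ‖w‖) • w := by
          rw [sub_smul, one_smul]; abel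
        rw [this, norm_smul, Real.norm_eq_abs]
        have hd0 : (0:ℝ) ≤ (a + b) / ‖w‖ := by positivity
        rw [abs_of_nonneg hd0, div_mul_cancel₀ _ hwpos.ne']
        linarith
  obtain ⟨δ, hδ, hT⟩ := main
  have hb' : 0 < b := hb
  obtain ⟨s, t, hs, ht, H⟩ := key_inner a b η ha hb' hη hba hsq s₁ t₁ s₂ t₂ δ hs₁ ht₁ hs₂ ht₂ hδ
    (by rw [hw] at hT; exact hT) heq₁ heq₂
  exact ⟨hε, s, t, hs, ht, inter_eq_iff.2 H⟩

end Key

end RhoAux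

open RhoAux in
/-- Triangle inequality for ϱ on Delone sets. -/
theorem rhoDelone_triangle {d : ℕ} (Λ₁ Λ₂ Λ₃ : Set (EuclideanSpace ℝ (Fin d)))
    (h₁ : IsDeloneSet Λ₁) (h₂ : IsDeloneSet Λ₂) (h₃ : IsDeloneSet Λ₃) :
    rhoDelone Λ₁ Λ₃ ≤ rhoDelone Λ₁ Λ₂ + rhoDelone Λ₂ Λ₃ := by
  set c : ℝ := (2 : ℝ) ^ (-(1 / 2 : ℝ)) with hc
  have hc0 : 0 < c := Real.rpow_pos_of_pos (by norm_num) _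
  have hcsq : c * c ≤ 1 / 2 := by
    rw [hc, ← Real.rpow_add (by norm_num : (0:ℝ) < 2),
      show (-(1/2:ℝ)) + (-(1/2:ℝ)) = ((-1 : ℤ) : ℝ) by norm_num, Real.rpow_intCast]
    norm_num
  have hnn : ∀ (Λ Λ' : Set (EuclideanSpace ℝ (Fin d))), 0 ≤ rhoBar Λ Λ' := by
    intro Λ Λ'
    exact Real.sInf_nonneg (fun x hx => hx.1.le)
  have hbdd : ∀ (Λ Λ' : Set (EuclideanSpace ℝ (Fin d))), BddBelow (Sset Λ Λ') := by
    intro Λ Λ'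
    exact ⟨0, fun x hx => hx.1.le⟩
  unfold rhoDelone
  rw [← hc]
  by_cases hbig : c ≤ min (rhoBar Λ₁ Λ₂) c + min (rhoBar Λ₂ Λ₃) c
  · exact le_trans (min_le_right _ _) hbig
  push_neg at hbig
  have hA0 : 0 ≤ min (rhoBar Λ₁ Λ₂) c := le_min (hnn _ _) hc0.le
  have hB0 : 0 ≤ min (rhoBar Λ₂ Λ₃) c := le_min (hnn _ _) hc0.le
  have hAc : rhoBar Λ₁ Λ₂ < c := by
    rcases min_lt_iff.1 (show min (rhoBar Λ₁ Λ₂) c < c by linarith) with h | h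
    · exact h
    · exact absurd h (lt_irrefl c)
  have hBc : rhoBar Λ₂ Λ₃ < c := by
    rcases min_lt_iff.1 (show min (rhoBar Λ₂ Λ₃) c < c by linarith) with h | h
    · exact h
    · exact absurd h (lt_irrefl c)
  rw [min_eq_left hAc.le, min_eq_left hBc.le]
  rw [min_eq_left hAc.le, min_eq_left hBc.le] at hbig
  refine le_trans (min_le_left _ _) ?_
  refine le_of_forall_pos_le_add (fun θ hθ => ?_)
  set θ' : ℝ := min θ (c - (rhoBar Λ₁ Λ₂ + rhoBar Λ₂ Λ₃)) with hθ'
  have hθ'0 : 0 < θ' := lt_min hθ (by linarith)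
  have hθ'θ : θ' ≤ θ := min_le_left _ _
  have hθ'c : rhoBar Λ₁ Λ₂ + rhoBar Λ₂ Λ₃ + θ' ≤ c := by
    have := min_le_right θ (c - (rhoBar Λ₁ Λ₂ + rhoBar Λ₂ Λ₃))
    rw [← hθ'] at this
    linarith
  obtain ⟨a, haS, halt⟩ := exists_lt_of_csInf_lt (Sset_nonempty h₁ h₂)
    (show sInf (Sset Λ₁ Λ₂) < rhoBar Λ₁ Λ₂ + θ' / 3 by rw [← rhoBar_eq]; linarith)
  obtain ⟨b, hbS, hblt⟩ := exists_lt_of_csInf_lt (Sset_nonempty h₂ h₃)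
    (show sInf (Sset Λ₂ Λ₃) < rhoBar Λ₂ Λ₃ + θ' / 3 by rw [← rhoBar_eq]; linarith)
  have ha0 : 0 < a := haS.1
  have hb0 : 0 < b := hbS.1
  have hsum : a + b + θ' / 3 ≤ c := by linarith [hnn Λ₁ Λ₂, hnn Λ₂ Λ₃]
  have hsq : (a + b + θ' / 3) * (a + b + θ' / 3) ≤ 1 / 2 := by
    have hpos : 0 < a + b + θ' / 3 := by linarith
    nlinarith
  have hmem : (a + b + θ' / 3) ∈ Sset Λ₁ Λ₃ := by
    rcases le_total b a with hba | hab
    · exact key_step a b (θ' / 3) (by linarith) hba hsq haS hbS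
    · have := key_step b a (θ' / 3) (by linarith) hab
        (by rw [show b + a + θ'/3 = a + b + θ'/3 from by ring] at *; exact (by linarith : (a+b+θ'/3)*(a+b+θ'/3) ≤ 1/2))
        (Sset_symm hbS) (Sset_symm haS)
      rw [show b + a + θ' / 3 = a + b + θ' / 3 from by ring] at this
      exact Sset_symm this
  have : rhoBar Λ₁ Λ₃ ≤ a + b + θ' / 3 := by
    rw [rhoBar_eq]
    exact csInf_le (hbdd _ _) hmem
  linarith
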